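/- Let d ≥ 2 and let ℓ ∈ ℤ^d with |ℓ| ≥ 2. Then the lattice sum ∑_{m ∈ ℤ^d} (1+|ℓ−m|)^{−d} (1+|m|)^{−d} is bounded by C |ℓ|^{−d} log|ℓ|, where C depends only on d. -/

import Mathlib

open scoped BigOperators

noncomputable def toE {d : ℕ} (x : Fin d → ℤ) : EuclideanSpace ℝ (Fin d) :=
  WithLp.toLp 2 (fun i => (x i : ℝ))

namespace Stmt0Aux

variable {d : ℕ}

def nInf (m : Fin d → ℤ) : ℕ := Finset.univ.sup fun i => (m i).natAbs

noncomputable def box (d K : ℕ) : Finset (Fin d → ℤ) :=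
  Fintype.piFinset fun _ => Finset.Icc (-(K : ℤ)) (K : ℤ)

lemma mem_box {K : ℕ} {m : Fin d → ℤ} : m ∈ box d K ↔ nInf m ≤ K := by
  simp only [box, Fintype.mem_piFinset, Finset.mem_Icc, nInf, Finset.sup_le_iff,
    Finset.mem_univ, true_implies]
  constructor
  · intro h i; have := h i; omega
  · intro h i; have := h i; omega

lemma card_box (K : ℕ) : (box d K).card = (2 * K + 1) ^ d := by
  simp only [box, Fintype.card_piFinset, Int.card_Icc, Finset.prod_const, Finset.card_univ,
    Fintype.card_fin]
  congr 1
  omega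

lemma box_subset {K K' : ℕ} (h : K ≤ K') : box d K ⊆ box d K' :=
  fun _ hm => mem_box.2 ((mem_box.1 hm).trans h)

lemma toE_sub (a b : Fin d → ℤ) : toE (a - b) = toE a - toE b := by
  ext i
  simp [toE]

lemma natAbs_le_nInf (m : Fin d → ℤ) (i : Fin d) : (m i).natAbs ≤ nInf m := by
  exact Finset.le_sup (f := fun j => (m j).natAbs) (Finset.mem_univ i)

lemma coord_sq_le (m : Fin d → ℤ) (i : Fin d) : ((m i : ℝ))^2 ≤ ‖toE m‖^2 := by
  rw [EuclideanSpace.norm_eq, Real.sq_sqrt (by positivity)]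
  have : ((m i : ℝ))^2 = ‖toE m i‖^2 := by simp [toE, sq_abs]
  rw [this]
  exact Finset.single_le_sum (f := fun j => ‖toE m j‖^2) (fun j _ => by positivity)
    (Finset.mem_univ i)

lemma nInf_le_norm (m : Fin d → ℤ) : (nInf m : ℝ) ≤ ‖toE m‖ := by
  rcases isEmpty_or_nonempty (Fin d) with h | h
  · have : nInf m = 0 := by simp [nInf, Finset.univ_eq_empty]
    rw [this]
    simpa using norm_nonneg (toE m)
  · obtain ⟨i, _, hi⟩ := Finset.exists_mem_eq_sup Finset.univ Finset.univ_nonempty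
      (fun i => (m i).natAbs)
    rw [nInf, hi]
    have h1 : ((m i).natAbs : ℝ) = |(m i : ℝ)| := by
      push_cast [Nat.cast_natAbs]
      rfl
    rw [h1]
    have := coord_sq_le m i
    have h2 : (0:ℝ) ≤ ‖toE m‖ := norm_nonneg _
    nlinarith [abs_nonneg ((m i : ℝ)), sq_abs ((m i : ℝ))]

lemma norm_le_d_mul_nInf (m : Fin d → ℤ) : ‖toE m‖ ≤ d * nInf m := by
  rw [EuclideanSpace.norm_eq]
  have h1 : ∑ i, ‖toE m i‖^2 ≤ (d : ℝ) * ((nInf m : ℝ))^2 := by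
    calc ∑ i, ‖toE m i‖^2 ≤ ∑ _i : Fin d, ((nInf m : ℝ))^2 := by
          refine Finset.sum_le_sum fun i _ => ?_
          have h2 : ‖toE m i‖ = ((m i).natAbs : ℝ) := by
            simp [toE, Nat.cast_natAbs]
          rw [h2]
          have := natAbs_le_nInf m i
          have : ((m i).natAbs : ℝ) ≤ (nInf m : ℝ) := by exact_mod_cast this
          nlinarith [Nat.cast_nonneg (α := ℝ) (m i).natAbs]
      _ = (d : ℝ) * ((nInf m : ℝ))^2 := by
          simp [Finset.sum_const, Finset.card_univ]
  have h3 : (d:ℝ) * ((nInf m : ℝ))^2 ≤ ((d:ℝ) * (nInf m : ℝ))^2 + 0^2 := by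
    rcases Nat.eq_zero_or_pos d with h | h
    · simp [h]
    · have hd1 : (1:ℝ) ≤ (d:ℝ) := by exact_mod_cast h
      nlinarith [Nat.cast_nonneg (α := ℝ) (nInf m)]
  calc Real.sqrt (∑ i, ‖toE m i‖^2) ≤ Real.sqrt (((d:ℝ) * (nInf m : ℝ))^2) := by
        apply Real.sqrt_le_sqrt
        simpa using h1.trans h3
    _ = (d:ℝ) * (nInf m : ℝ) := by
        rw [Real.sqrt_sq (by positivity)]

-- geometric-sum based power inequalities
lemma sub_pow_le {a b : ℝ} (hb : 0 ≤ b) (hba : b ≤ a) (n : ℕ) :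
    a ^ n - b ^ n ≤ n * a ^ (n - 1) * (a - b) := by
  rcases Nat.eq_zero_or_pos n with h | h
  · simp [h]
  have key : a ^ n - b ^ n = (∑ i ∈ Finset.range n, a ^ i * b ^ (n - 1 - i)) * (a - b) :=
    (geom_sum₂_mul a b n).symm
  rw [key]
  have hsum : (∑ i ∈ Finset.range n, a ^ i * b ^ (n - 1 - i)) ≤ n * a ^ (n - 1) := by
    calc (∑ i ∈ Finset.range n, a ^ i * b ^ (n - 1 - i))
        ≤ ∑ _i ∈ Finset.range n, a ^ (n - 1) := by
          refine Finset.sum_le_sum fun i hi => ?_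
          have hi' : i < n := Finset.mem_range.1 hi
          have h1 : a ^ i * b ^ (n - 1 - i) ≤ a ^ i * a ^ (n - 1 - i) := by
            have := pow_le_pow_left₀ hb hba (n - 1 - i)
            have ha : (0:ℝ) ≤ a ^ i := pow_nonneg (hb.trans hba) i
            exact mul_le_mul_of_nonneg_left this ha
          have h2 : a ^ i * a ^ (n - 1 - i) = a ^ (n - 1) := by
            rw [← pow_add]
            congr 1
            omega
          linarith
      _ = n * a ^ (n - 1) := by
          simp [Finset.sum_const, mul_comm]
  have hab : (0:ℝ) ≤ a - b := by linarith
  exact mul_le_mul_of_nonneg_right hsum hab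

lemma le_sub_pow {a b : ℝ} (hb : 0 ≤ b) (hba : b ≤ a) (n : ℕ) :
    (n : ℝ) * b ^ (n - 1) * (a - b) ≤ a ^ n - b ^ n := by
  rcases Nat.eq_zero_or_pos n with h | h
  · simp [h]
  have key : a ^ n - b ^ n = (∑ i ∈ Finset.range n, a ^ i * b ^ (n - 1 - i)) * (a - b) :=
    (geom_sum₂_mul a b n).symm
  rw [key]
  have hsum : (n : ℝ) * b ^ (n - 1) ≤ ∑ i ∈ Finset.range n, a ^ i * b ^ (n - 1 - i) := by
    calc (n:ℝ) * b ^ (n-1) = ∑ _i ∈ Finset.range n, b ^ (n - 1) := by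
          simp [Finset.sum_const, mul_comm]
      _ ≤ ∑ i ∈ Finset.range n, a ^ i * b ^ (n - 1 - i) := by
          refine Finset.sum_le_sum fun i hi => ?_
          have hi' : i < n := Finset.mem_range.1 hi
          have h2 : b ^ i * b ^ (n - 1 - i) = b ^ (n - 1) := by
            rw [← pow_add]; congr 1; omega
          have h1 : b ^ i * b ^ (n - 1 - i) ≤ a ^ i * b ^ (n - 1 - i) := by
            have := pow_le_pow_left₀ hb hba i
            exact mul_le_mul_of_nonneg_right this (pow_nonneg hb _)
          linarith
  have hab : (0:ℝ) ≤ a - b := by linarith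
  exact mul_le_mul_of_nonneg_right hsum hab

lemma card_shell_le (hd1 : 1 ≤ d) (k : ℕ) :
    (((box d (k+1) \ box d k).card : ℝ)) ≤ d * 2 ^ d * (k + 2 : ℝ) ^ (d - 1) := by
  rw [Finset.card_sdiff_of_subset (box_subset (Nat.le_succ k)), card_box, card_box]
  have hle : (2 * k + 1) ^ d ≤ (2 * (k+1) + 1) ^ d :=
    Nat.pow_le_pow_left (by omega) d
  rw [Nat.cast_sub hle]
  push_cast
  have he0 : (2 * ((k:ℝ)+1) + 1) = 2 * (k:ℝ) + 3 := by ring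
  rw [he0]
  have h1 : ((2 * (k:ℝ) + 3)) ^ d - (2 * k + 1) ^ d
      ≤ d * (2 * (k:ℝ) + 3) ^ (d - 1) * 2 := by
    have := sub_pow_le (a := 2 * (k:ℝ) + 3) (b := 2 * (k:ℝ) + 1) (by positivity)
      (by linarith) d
    have he : (2 * (k:ℝ) + 3) - (2 * k + 1) = 2 := by ring
    rw [he] at this
    linarith [this]
  have h2 : (2 * (k:ℝ) + 3) ^ (d - 1) ≤ 2 ^ (d-1) * ((k:ℝ)+2)^(d-1) := by
    rw [← mul_pow]
    apply pow_le_pow_left₀ (by positivity)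
    linarith
  have h4 : (2:ℝ) ^ (d-1) * 2 = 2 ^ d := by
    rw [← pow_succ]
    congr 1
    omega
  calc (2 * (k:ℝ) + 3) ^ d - (2 * k + 1) ^ d
      ≤ d * (2 * (k:ℝ) + 3) ^ (d - 1) * 2 := h1
    _ ≤ d * (2 ^ (d-1) * ((k:ℝ)+2)^(d-1)) * 2 := by gcongr
    _ = d * (2 ^ (d-1) * 2) * ((k:ℝ)+2)^(d-1) := by ring
    _ = d * 2 ^ d * ((k:ℝ)+2)^(d-1) := by rw [h4]

noncomputable def w (p : ℕ) (m : Fin d → ℤ) : ℝ := ((1 + (nInf m : ℝ)) ^ p)⁻¹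

lemma w_nonneg (p : ℕ) (m : Fin d → ℤ) : 0 ≤ w p m := by
  unfold w; positivity

lemma shell_sum_le (hd1 : 1 ≤ d) (p k : ℕ) :
    ∑ m ∈ box d (k+1) \ box d k, w p m
      ≤ (d * 2 ^ d : ℝ) * (k + 2 : ℝ) ^ (d - 1) * (((k:ℝ) + 2) ^ p)⁻¹ := by
  have hval : ∀ m ∈ box d (k+1) \ box d k, w p m = (((k:ℝ) + 2) ^ p)⁻¹ := by
    intro m hm
    have h1 := mem_box.1 (Finset.mem_sdiff.1 hm).1
    have h2 : ¬ nInf m ≤ k := fun h => (Finset.mem_sdiff.1 hm).2 (mem_box.2 h)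
    have h3 : nInf m = k + 1 := by omega
    unfold w
    rw [h3]
    push_cast
    ring_nf
  rw [Finset.sum_congr rfl hval, Finset.sum_const, nsmul_eq_mul]
  have hpos : (0:ℝ) ≤ (((k:ℝ) + 2) ^ p)⁻¹ := by positivity
  exact mul_le_mul_of_nonneg_right (card_shell_le hd1 k) hpos

lemma sum_box_zero (p : ℕ) : ∑ m ∈ box d 0, w p m = 1 := by
  have hval : ∀ m ∈ box d 0, w p m = 1 := by
    intro m hm
    have h1 := mem_box.1 hm
    unfold w
    rw [Nat.le_zero.1 h1]
    simp
  rw [Finset.sum_congr rfl hval, Finset.sum_const, nsmul_eq_mul, mul_one]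
  have : (box d 0).card = 1 := by rw [card_box]; simp
  rw [this]; norm_num

lemma shell_incr_le (hd1 : 1 ≤ d) (k : ℕ) :
    ∑ m ∈ box d (k+1) \ box d k, w d m ≤ (d * 2 ^ d : ℝ) * ((k:ℝ) + 2)⁻¹ := by
  refine (shell_sum_le hd1 d k).trans_eq ?_
  have h : ((k:ℝ) + 2) ^ (d-1) * (((k:ℝ) + 2) ^ d)⁻¹ = ((k:ℝ)+2)⁻¹ := by
    have hd' : d = (d-1) + 1 := by omega
    rw [hd', pow_succ]
    have hkpos : (0:ℝ) < ((k:ℝ)+2) ^ (d-1) := by positivity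
    field_simp
    simp
  rw [mul_assoc, mul_assoc, h]
  ring

lemma log_step (k : ℕ) : ((k:ℝ) + 2)⁻¹ ≤ Real.log ((k:ℝ)+2) - Real.log ((k:ℝ)+1) := by
  have hpos : (0:ℝ) < ((k:ℝ)+1) / ((k:ℝ)+2) := by positivity
  have h := Real.log_le_sub_one_of_pos hpos
  rw [Real.log_div (by positivity) (by positivity)] at h
  have he : ((k:ℝ)+1) / ((k:ℝ)+2) - 1 = -(((k:ℝ)+2)⁻¹) := by
    field_simp
    norm_num
  rw [he] at h
  linarith

lemma sum_box_w_le (hd1 : 1 ≤ d) (K : ℕ) :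
    ∑ m ∈ box d K, w d m ≤ (d * 2 ^ d : ℝ) * (1 + Real.log ((K:ℝ) + 1)) := by
  induction K with
  | zero =>
      rw [sum_box_zero]
      have h1 : (1:ℝ) ≤ d * 2 ^ d := by
        have : (1:ℝ) ≤ (d:ℝ) := by exact_mod_cast hd1
        have h2 : (1:ℝ) ≤ 2 ^ d := one_le_pow₀ (by norm_num)
        nlinarith
      simpa using h1
  | succ K ih =>
      have hsplit : ∑ m ∈ box d (K+1), w d m
          = ∑ m ∈ box d (K+1) \ box d K, w d m + ∑ m ∈ box d K, w d m :=
        (Finset.sum_sdiff (box_subset (Nat.le_succ K))).symm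
      rw [hsplit]
      have h1 := shell_incr_le hd1 K
      have h2 := log_step K
      have hA : (0:ℝ) ≤ d * 2 ^ d := by positivity
      have hcast : ((K:ℝ) + 1 + 1) = (K:ℝ) + 2 := by ring
      push_cast
      rw [hcast]
      nlinarith [h1, ih, h2, hA]

lemma key_numeric (hd1 : 1 ≤ d) (x : ℝ) (hx0 : 0 < x) :
    (d * 2 ^ d : ℝ) * (x + 1) ^ (d - 1) * ((x + 1) ^ (2*d))⁻¹
      ≤ 2 ^ d * (x ^ d)⁻¹ - 2 ^ d * ((x+1) ^ d)⁻¹ := by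
  have hy0 : (0:ℝ) < x + 1 := by linarith
  have hA0 : (0:ℝ) < x ^ d := by positivity
  have hB0 : (0:ℝ) < (x+1) ^ d := by positivity
  have hP0 : (0:ℝ) < (x+1) ^ (d-1) := by positivity
  have hQ0 : (0:ℝ) < x ^ (d-1) := by positivity
  have hkey0 : (d:ℝ) * x ^ (d-1) ≤ (x+1) ^ d - x ^ d := by
    have := le_sub_pow (a := x + 1) (b := x) hx0.le (by linarith) d
    simpa using this
  have eA : x ^ d = x ^ (d-1) * x := by rw [← pow_succ]; congr 1; omega
  have eB : (x+1) ^ d = (x+1) ^ (d-1) * (x+1) := by rw [← pow_succ]; congr 1; omega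
  have e2d : (x+1) ^ (2*d) = ((x+1) ^ d)^2 := by rw [← pow_mul]; congr 1; omega
  have hd0 : (0:ℝ) ≤ (d:ℝ) := Nat.cast_nonneg d
  have hmain : (d:ℝ) * (x+1) ^ (d-1) * (x ^ d * (x+1) ^ d)
      ≤ ((x+1) ^ d - x ^ d) * ((x+1) ^ d)^2 := by
    have s2 : (d:ℝ) * (x+1) ^ (d-1) * x ^ d ≤ (d:ℝ) * x ^ (d-1) * (x+1) ^ d := by
      rw [eA, eB]
      nlinarith [mul_nonneg (mul_nonneg hd0 hP0.le) hQ0.le]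
    have s1 : (d:ℝ) * x ^ (d-1) * (x+1) ^ d ≤ ((x+1) ^ d - x ^ d) * (x+1) ^ d :=
      mul_le_mul_of_nonneg_right hkey0 hB0.le
    nlinarith [mul_le_mul_of_nonneg_right s2 hB0.le,
      mul_le_mul_of_nonneg_right s1 hB0.le]
  have final : ((d:ℝ) * (x+1) ^ (d-1)) / (((x+1) ^ d)^2)
      ≤ ((x+1) ^ d - x ^ d) / (x ^ d * (x+1) ^ d) := by
    rw [div_le_div_iff₀ (by positivity) (by positivity)]
    exact hmain
  have hr : 2 ^ d * (x ^ d)⁻¹ - 2 ^ d * ((x+1) ^ d)⁻¹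
      = 2 ^ d * (((x+1) ^ d - x ^ d) / (x ^ d * (x+1) ^ d)) := by
    field_simp
  have hl : (d * 2 ^ d : ℝ) * (x + 1) ^ (d - 1) * ((x + 1) ^ (2*d))⁻¹
      = 2 ^ d * (((d:ℝ) * (x+1) ^ (d-1)) / (((x+1) ^ d)^2)) := by
    rw [e2d]
    field_simp
  rw [hl, hr]
  exact mul_le_mul_of_nonneg_left final (by positivity)

lemma tail_sum_box_le (hd1 : 1 ≤ d) (J : ℕ) :
    ∀ K, J ≤ K → ∑ m ∈ box d K \ box d J, w (2*d) m
      ≤ 2 ^ d * (((J:ℝ)+1) ^ d)⁻¹ - 2 ^ d * (((K:ℝ)+1) ^ d)⁻¹ := by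
  refine Nat.le_induction ?_ ?_
  · simp
  · intro K hJK ih
    have hJK1 : J ≤ K + 1 := by omega
    have hsplit : ∑ m ∈ box d (K+1) \ box d J, w (2*d) m
        = (∑ m ∈ box d K \ box d J, w (2*d) m)
          + ∑ m ∈ box d (K+1) \ box d K, w (2*d) m := by
      rw [Finset.sum_sdiff_eq_sub (box_subset hJK), Finset.sum_sdiff_eq_sub (box_subset hJK1),
        Finset.sum_sdiff_eq_sub (box_subset (Nat.le_succ K))]
      ring
    rw [hsplit]
    have hshell := shell_sum_le hd1 (2*d) K
    have hkey := key_numeric hd1 ((K:ℝ)+1) (by positivity)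
    rw [show ((K:ℝ)+1)+1 = (K:ℝ)+2 from by ring] at hkey
    push_cast
    rw [show ((K:ℝ)+1)+1 = (K:ℝ)+2 from by ring]
    linarith [hshell, ih, hkey]

lemma tail_sum_le (hd1 : 1 ≤ d) (J : ℕ) (u : Finset (Fin d → ℤ))
    (hu : ∀ m ∈ u, m ∉ box d J) :
    ∑ m ∈ u, w (2*d) m ≤ 2 ^ d * (((J:ℝ)+1) ^ d)⁻¹ := by
  set K : ℕ := max J (u.sup nInf) with hK
  have hsub : u ⊆ box d K \ box d J := by
    intro m hm
    rw [Finset.mem_sdiff]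
    refine ⟨mem_box.2 ?_, hu m hm⟩
    exact le_trans (Finset.le_sup (f := nInf) hm) (le_max_right _ _)
  have h1 : ∑ m ∈ u, w (2*d) m ≤ ∑ m ∈ box d K \ box d J, w (2*d) m :=
    Finset.sum_le_sum_of_subset_of_nonneg hsub (fun m _ _ => w_nonneg _ m)
  have h2 := tail_sum_box_le hd1 J K (le_max_left _ _)
  have h3 : (0:ℝ) ≤ 2 ^ d * (((K:ℝ)+1) ^ d)⁻¹ := by positivity
  linarith

lemma inv_anti {a b : ℝ} (hb : 0 < b) (h : b ≤ a) : a⁻¹ ≤ b⁻¹ := by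
  have := one_div_le_one_div_of_le hb h
  simpa [one_div] using this

end Stmt0Aux

open Stmt0Aux in
/-- for `d ≥ 2` and `ℓ ∈ ℤ^d` with `|ℓ| ≥ 2`,
`∑_{m ∈ ℤ^d} (1+|ℓ−m|)^{−d} (1+|m|)^{−d} ≤ C |ℓ|^{−d} log|ℓ|` with `C = C(d)`. -/
theorem stmt0 (d : ℕ) (hd : 2 ≤ d) :
    ∃ C : ℝ, 0 < C ∧ ∀ ℓ : Fin d → ℤ, 2 ≤ ‖toE ℓ‖ →
      (∑' m : Fin d → ℤ,
          (1 + ‖toE (ℓ - m)‖) ^ (-(d : ℝ)) * (1 + ‖toE m‖) ^ (-(d : ℝ)))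
        ≤ C * ‖toE ℓ‖ ^ (-(d : ℝ)) * Real.log ‖toE ℓ‖ := by
  classical
  have hd1 : 1 ≤ d := by omega
  have hdR : (1:ℝ) ≤ (d:ℝ) := by exact_mod_cast hd1
  have hlog2 : (0:ℝ) < Real.log 2 := Real.log_pos (by norm_num)
  set c₂ : ℝ := (Real.log 2)⁻¹ with hc₂
  have hc₂0 : 0 < c₂ := inv_pos.2 hlog2
  set Ad : ℝ := d * 2 ^ d with hAd
  have hAd0 : (0:ℝ) < Ad := by rw [hAd]; positivity
  set C₁ : ℝ := 2 ^ d * Ad * (1 + c₂) with hC₁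
  have hC₁0 : 0 < C₁ := by
    apply mul_pos (mul_pos (by positivity) hAd0)
    linarith
  set C₃ : ℝ := 3 ^ d * 2 ^ d * ((2*(d:ℝ))) ^ d * c₂ with hC₃
  have hC₃0 : 0 < C₃ := by
    apply mul_pos (mul_pos (mul_pos (by positivity) (by positivity)) (by positivity)) hc₂0
  refine ⟨2*C₁ + C₃, by linarith, fun ℓ hL2 => ?_⟩
  set L : ℝ := ‖toE ℓ‖ with hLdef
  have hL0 : (0:ℝ) < L := by linarith
  have hlogL : (0:ℝ) < Real.log L := Real.log_pos (by linarith)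
  have h1logL : (1:ℝ) ≤ c₂ * Real.log L := by
    have h1 : Real.log 2 ≤ Real.log L := Real.log_le_log (by norm_num) hL2
    have h2 : c₂ * Real.log 2 = 1 := inv_mul_cancel₀ hlog2.ne'
    nlinarith
  set K₁ : ℕ := ⌊L/2⌋₊ with hK₁
  set K₀ : ℕ := ⌊L/(2*(d:ℝ))⌋₊ with hK₀
  set G : (Fin d → ℤ) → ℝ :=
    fun n => if ‖toE n‖ ≤ L/2 then (2/L)^d * ((1+‖toE n‖)^d)⁻¹ else 0 with hG
  set g₃ : (Fin d → ℤ) → ℝ :=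
    fun m => if m ∈ box d K₀ then 0 else 3^d * w (2*d) m with hg₃
  have hG_nonneg : ∀ n, 0 ≤ G n := by
    intro n
    rw [hG]
    dsimp only
    split
    · positivity
    · exact le_refl 0
  have hg₃_nonneg : ∀ m, 0 ≤ g₃ m := by
    intro m
    rw [hg₃]
    dsimp only
    split
    · exact le_refl 0
    · have := w_nonneg (d := d) (2*d) m
      positivity
  -- support of G
  have hGsupp : ∀ n, n ∉ box d K₁ → G n = 0 := by
    intro n hn
    rw [hG]
    dsimp only
    rw [if_neg]
    intro hcond
    apply hn
    apply mem_box.2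
    apply Nat.le_floor
    exact (nInf_le_norm n).trans hcond
  have hGsummable : Summable G := summable_of_ne_finset_zero hGsupp
  -- pointwise bound G by w
  have hGw : ∀ n, G n ≤ (2/L)^d * w d n := by
    intro n
    rw [hG]
    dsimp only
    split
    · apply mul_le_mul_of_nonneg_left _ (by positivity)
      apply inv_anti (by positivity)
      apply pow_le_pow_left₀ (by positivity)
      linarith [nInf_le_norm n]
    · have := w_nonneg (d := d) d n
      positivity
  -- finset sums of G
  have hGsum : ∀ u : Finset (Fin d → ℤ),
      ∑ n ∈ u, G n ≤ (2/L)^d * (Ad * (1 + Real.log ((K₁:ℝ)+1))) := by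
    intro u
    have e1 : ∑ n ∈ u, G n = ∑ n ∈ u ∩ box d K₁, G n := by
      refine (Finset.sum_subset Finset.inter_subset_left ?_).symm
      intro x hx hnx
      apply hGsupp
      intro hbx
      exact hnx (Finset.mem_inter.2 ⟨hx, hbx⟩)
    rw [e1]
    calc ∑ n ∈ u ∩ box d K₁, G n
        ≤ ∑ n ∈ u ∩ box d K₁, (2/L)^d * w d n := Finset.sum_le_sum fun n _ => hGw n
      _ ≤ ∑ n ∈ box d K₁, (2/L)^d * w d n := by
          refine Finset.sum_le_sum_of_subset_of_nonneg Finset.inter_subset_right ?_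
          intro n _ _
          have := w_nonneg (d := d) d n
          positivity
      _ = (2/L)^d * ∑ n ∈ box d K₁, w d n := (Finset.mul_sum _ _ _).symm
      _ ≤ (2/L)^d * (Ad * (1 + Real.log ((K₁:ℝ)+1))) := by
          apply mul_le_mul_of_nonneg_left _ (by positivity)
          rw [hAd]
          exact sum_box_w_le hd1 K₁
  have hGtsum : ∑' n, G n ≤ (2/L)^d * (Ad * (1 + Real.log ((K₁:ℝ)+1))) :=
    Summable.tsum_le_of_sum_le hGsummable hGsum
  -- bound the G-term by C₁ * (L^d)⁻¹ * log L
  have hTG : (2/L)^d * (Ad * (1 + Real.log ((K₁:ℝ)+1))) ≤ C₁ * (L^d)⁻¹ * Real.log L := by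
    have hK₁L : ((K₁:ℝ)) + 1 ≤ L := by
      have h1 : ((K₁:ℝ)) ≤ L/2 := Nat.floor_le (by positivity)
      linarith
    have hlogK : Real.log ((K₁:ℝ)+1) ≤ Real.log L := Real.log_le_log (by positivity) hK₁L
    have h2 : 1 + Real.log ((K₁:ℝ)+1) ≤ (1 + c₂) * Real.log L := by
      nlinarith
    have e3 : (2/L)^d = 2^d * (L^d)⁻¹ := by
      rw [div_pow, div_eq_mul_inv]
    rw [e3]
    calc 2^d * (L^d)⁻¹ * (Ad * (1 + Real.log ((K₁:ℝ)+1)))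
        ≤ 2^d * (L^d)⁻¹ * (Ad * ((1 + c₂) * Real.log L)) := by
          apply mul_le_mul_of_nonneg_left _ (by positivity)
          exact mul_le_mul_of_nonneg_left h2 hAd0.le
      _ = C₁ * (L^d)⁻¹ * Real.log L := by rw [hC₁]; ring
  -- g₂ via the equiv m ↦ ℓ - m
  have hg₂summable : Summable (fun m => G (ℓ - m)) := by
    have he : (fun m => G (ℓ - m)) = G ∘ (Equiv.subLeft ℓ) := rfl
    rw [he]
    exact (Equiv.summable_iff (Equiv.subLeft ℓ)).2 hGsummable
  have hg₂tsum : ∑' m, G (ℓ - m) = ∑' n, G n := Equiv.tsum_eq (Equiv.subLeft ℓ) G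
  -- g₃ bounds
  have hg₃sum : ∀ u : Finset (Fin d → ℤ),
      ∑ m ∈ u, g₃ m ≤ 3^d * (2 ^ d * (((K₀:ℝ)+1) ^ d)⁻¹) := by
    intro u
    have e1 : ∑ m ∈ u, g₃ m = ∑ m ∈ u \ box d K₀, g₃ m := by
      refine (Finset.sum_subset (Finset.sdiff_subset) ?_).symm
      intro x hx hnx
      rw [hg₃]
      dsimp only
      rw [if_pos]
      by_contra hbx
      exact hnx (Finset.mem_sdiff.2 ⟨hx, hbx⟩)
    rw [e1]
    have e2 : ∑ m ∈ u \ box d K₀, g₃ m = 3^d * ∑ m ∈ u \ box d K₀, w (2*d) m := by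
      rw [Finset.mul_sum]
      refine Finset.sum_congr rfl fun m hm => ?_
      rw [hg₃]
      dsimp only
      rw [if_neg (Finset.mem_sdiff.1 hm).2]
    rw [e2]
    apply mul_le_mul_of_nonneg_left _ (by positivity)
    exact tail_sum_le hd1 K₀ _ (fun m hm => (Finset.mem_sdiff.1 hm).2)
  have hg₃summable : Summable g₃ := summable_of_sum_le hg₃_nonneg hg₃sum
  have hg₃tsum : ∑' m, g₃ m ≤ 3^d * (2 ^ d * (((K₀:ℝ)+1) ^ d)⁻¹) :=
    Summable.tsum_le_of_sum_le hg₃summable hg₃sum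
  have hT₃ : (3:ℝ)^d * (2 ^ d * (((K₀:ℝ)+1) ^ d)⁻¹) ≤ C₃ * (L^d)⁻¹ * Real.log L := by
    have h1 : L/(2*(d:ℝ)) < (K₀:ℝ) + 1 := Nat.lt_floor_add_one _
    have h2 : (L/(2*(d:ℝ)))^d ≤ ((K₀:ℝ)+1)^d := by
      apply pow_le_pow_left₀ (by positivity) h1.le
    have h3 : (((K₀:ℝ)+1) ^ d)⁻¹ ≤ ((L/(2*(d:ℝ)))^d)⁻¹ := inv_anti (by positivity) h2
    have h4 : ((L/(2*(d:ℝ)))^d)⁻¹ = (2*(d:ℝ))^d * (L^d)⁻¹ := by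
      rw [div_pow, inv_div, div_eq_mul_inv]
    calc (3:ℝ)^d * (2 ^ d * (((K₀:ℝ)+1) ^ d)⁻¹)
        ≤ (3:ℝ)^d * (2 ^ d * ((2*(d:ℝ))^d * (L^d)⁻¹)) := by
          apply mul_le_mul_of_nonneg_left _ (by positivity)
          apply mul_le_mul_of_nonneg_left _ (by positivity)
          rw [← h4]
          exact h3
      _ = (3^d * 2^d * ((2*(d:ℝ)))^d * 1) * (L^d)⁻¹ := by ring
      _ ≤ (3^d * 2^d * ((2*(d:ℝ)))^d * (c₂ * Real.log L)) * (L^d)⁻¹ := by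
          apply mul_le_mul_of_nonneg_right _ (by positivity)
          apply mul_le_mul_of_nonneg_left h1logL (by positivity)
      _ = C₃ * (L^d)⁻¹ * Real.log L := by rw [hC₃]; ring
  -- pointwise decomposition
  set f' : (Fin d → ℤ) → ℝ :=
    fun m => ((1+‖toE (ℓ - m)‖)^d)⁻¹ * ((1+‖toE m‖)^d)⁻¹ with hf'
  have hf'nonneg : ∀ m, 0 ≤ f' m := by
    intro m
    rw [hf']
    positivity
  have hpoint : ∀ m, f' m ≤ G m + G (ℓ - m) + g₃ m := by
    intro m
    by_cases h1 : ‖toE m‖ ≤ L/2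
    · -- region 1 : f' ≤ G m
      have e : toE (ℓ - m) = toE ℓ - toE m := toE_sub ℓ m
      have htri := norm_sub_norm_le (toE ℓ) (toE m)
      rw [← e] at htri
      have hlm : L/2 ≤ 1 + ‖toE (ℓ - m)‖ := by
        have : L - ‖toE m‖ ≤ ‖toE (ℓ - m)‖ := htri
        linarith
      have hb : ((1+‖toE (ℓ - m)‖)^d)⁻¹ ≤ (2/L)^d := by
        have h5 : ((L/2)^d)⁻¹ = (2/L)^d := by
          rw [← inv_pow, inv_div]
        rw [← h5]
        apply inv_anti (by positivity)
        apply pow_le_pow_left₀ (by positivity) hlm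
      have hfG : f' m ≤ G m := by
        rw [hf', hG]
        dsimp only
        rw [if_pos h1]
        exact mul_le_mul_of_nonneg_right hb (by positivity)
      have := hG_nonneg (ℓ - m)
      have := hg₃_nonneg m
      linarith
    · by_cases h2 : ‖toE (ℓ - m)‖ ≤ L/2
      · -- region 2 : f' ≤ G (ℓ - m)
        have e : toE ℓ = toE (ℓ - m) + toE m := by
          rw [toE_sub]
          abel
        have htri : L ≤ ‖toE (ℓ - m)‖ + ‖toE m‖ := by
          calc L = ‖toE ℓ‖ := hLdef
            _ ≤ ‖toE (ℓ - m)‖ + ‖toE m‖ := by rw [e]; exact norm_add_le _ _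
        have hm2 : L/2 ≤ 1 + ‖toE m‖ := by linarith
        have hb : ((1+‖toE m‖)^d)⁻¹ ≤ (2/L)^d := by
          have h5 : ((L/2)^d)⁻¹ = (2/L)^d := by
            rw [← inv_pow, inv_div]
          rw [← h5]
          apply inv_anti (by positivity)
          apply pow_le_pow_left₀ (by positivity) hm2
        have hfG : f' m ≤ G (ℓ - m) := by
          rw [hf', hG]
          dsimp only
          rw [if_pos h2]
          calc ((1+‖toE (ℓ - m)‖)^d)⁻¹ * ((1+‖toE m‖)^d)⁻¹
              ≤ ((1+‖toE (ℓ - m)‖)^d)⁻¹ * (2/L)^d :=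
                mul_le_mul_of_nonneg_left hb (by positivity)
            _ = (2/L)^d * ((1+‖toE (ℓ - m)‖)^d)⁻¹ := by ring
        have := hG_nonneg m
        have := hg₃_nonneg m
        linarith
      · -- region 3 : f' ≤ g₃ m
        push_neg at h1 h2
        have hdpos : (0:ℝ) < (d:ℝ) := by linarith
        -- m ∉ box K₀
        have hnm : L/(2*(d:ℝ)) < (nInf m : ℝ) := by
          have hseq := norm_le_d_mul_nInf m
          rw [div_lt_iff₀ (by positivity)]
          have h6 : L/2 < (d:ℝ) * (nInf m:ℝ) := lt_of_lt_of_le h1 hseq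
          rw [div_lt_iff₀ (by norm_num)] at h6
          linarith [h6]
        have hK0lt : K₀ < nInf m := by
          have h7 : (K₀:ℝ) ≤ L/(2*(d:ℝ)) := Nat.floor_le (by positivity)
          exact_mod_cast lt_of_le_of_lt h7 hnm
        have hnotbox : m ∉ box d K₀ := by
          intro hmem
          exact absurd (mem_box.1 hmem) (not_le.2 hK0lt)
        have hg₃m : g₃ m = 3^d * w (2*d) m := by
          rw [hg₃]
          dsimp only
          rw [if_neg hnotbox]
        -- 1 + ‖toE m‖ ≤ 3 * (1 + ‖toE (ℓ - m)‖)
        have e : toE m = toE ℓ - toE (ℓ - m) := by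
          rw [toE_sub]
          abel
        have htri : ‖toE m‖ ≤ L + ‖toE (ℓ - m)‖ := by
          rw [e]
          calc ‖toE ℓ - toE (ℓ - m)‖ ≤ ‖toE ℓ‖ + ‖toE (ℓ - m)‖ := norm_sub_le _ _
            _ = L + ‖toE (ℓ - m)‖ := by rw [← hLdef]
        have h3le : (1 + ‖toE m‖)/3 ≤ 1 + ‖toE (ℓ - m)‖ := by
          have : L < 2 * ‖toE (ℓ - m)‖ := by linarith
          linarith
        have hb : ((1+‖toE (ℓ - m)‖)^d)⁻¹ ≤ 3^d * ((1+‖toE m‖)^d)⁻¹ := by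
          have h5 : (((1 + ‖toE m‖)/3)^d)⁻¹ = 3^d * ((1+‖toE m‖)^d)⁻¹ := by
            rw [div_pow, inv_div, div_eq_mul_inv]
          rw [← h5]
          apply inv_anti (by positivity)
          apply pow_le_pow_left₀ (by positivity) h3le
        have hf3 : f' m ≤ 3^d * ((1+‖toE m‖)^(2*d))⁻¹ := by
          rw [hf']
          dsimp only
          have e8 : ((1+‖toE m‖)^d)⁻¹ * ((1+‖toE m‖)^d)⁻¹ = ((1+‖toE m‖)^(2*d))⁻¹ := by
            rw [← mul_inv, ← pow_add, two_mul]
          calc ((1+‖toE (ℓ - m)‖)^d)⁻¹ * ((1+‖toE m‖)^d)⁻¹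
              ≤ (3^d * ((1+‖toE m‖)^d)⁻¹) * ((1+‖toE m‖)^d)⁻¹ :=
                mul_le_mul_of_nonneg_right hb (by positivity)
            _ = 3^d * (((1+‖toE m‖)^d)⁻¹ * ((1+‖toE m‖)^d)⁻¹) := by ring
            _ = 3^d * ((1+‖toE m‖)^(2*d))⁻¹ := by rw [e8]
        have hf4 : (3:ℝ)^d * ((1+‖toE m‖)^(2*d))⁻¹ ≤ 3^d * w (2*d) m := by
          apply mul_le_mul_of_nonneg_left _ (by positivity)
          unfold w
          apply inv_anti (by positivity)
          apply pow_le_pow_left₀ (by positivity)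
          linarith [nInf_le_norm m]
        have := hG_nonneg m
        have := hG_nonneg (ℓ - m)
        rw [hg₃m]
        linarith
  -- assemble
  have hsum3 : Summable (fun m => G m + G (ℓ - m) + g₃ m) :=
    (hGsummable.add hg₂summable).add hg₃summable
  have hf'summable : Summable f' := Summable.of_nonneg_of_le hf'nonneg hpoint hsum3
  have htsum : ∑' m, f' m ≤ ∑' m, (G m + G (ℓ - m) + g₃ m) :=
    Summable.tsum_le_tsum hpoint hf'summable hsum3
  rw [Summable.tsum_add (hGsummable.add hg₂summable) hg₃summable,
    Summable.tsum_add hGsummable hg₂summable, hg₂tsum] at htsum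
  have hgoalL : (∑' m : Fin d → ℤ,
      (1 + ‖toE (ℓ - m)‖) ^ (-(d : ℝ)) * (1 + ‖toE m‖) ^ (-(d : ℝ))) = ∑' m, f' m := by
    refine tsum_congr fun m => ?_
    rw [hf']
    dsimp only
    rw [Real.rpow_neg (by positivity), Real.rpow_natCast,
      Real.rpow_neg (by positivity), Real.rpow_natCast]
  have hgoalR : L ^ (-(d:ℝ)) = (L^d)⁻¹ := by
    rw [Real.rpow_neg hL0.le, Real.rpow_natCast]
  rw [hgoalL, hgoalR]
  have hring : (2*C₁+C₃) * (L^d)⁻¹ * Real.log L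
      = C₁*(L^d)⁻¹*Real.log L + C₁*(L^d)⁻¹*Real.log L + C₃*(L^d)⁻¹*Real.log L := by
    ring
  rw [hring]
  linarith [htsum, hGtsum, hTG, hg₃tsum, hT₃]
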